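/- Let α > k > 0 be real numbers and let C > 0. Then there exists D with 0 < D ≤ 1, depending only on α, k and C, such that every sequence (v_i)_{i≥1} of nonnegative real numbers satisfying v_1 ≥ 1 and v_{i+1} ≥ v_i + C · v_i^{k/α} for every integer i ≥ 1 also satisfies v_i ≥ D · i^{α/(α−k)} for every integer i ≥ 1. -/

import Mathlib

open Real

private lemma key_growth {p : ℝ} (hp : 1 ≤ p) {x : ℝ} (hx : 1 ≤ x) :
    (x + 1) ^ p - x ^ p ≤ p * 2 ^ (p - 1) * x ^ (p - 1) := by
  have hx0 : (0:ℝ) < x := lt_of_lt_of_le one_pos hx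
  have hx1 : (0:ℝ) < x + 1 := by linarith
  -- Bernoulli: x^p = (x+1)^p * (1 - 1/(x+1))^p ≥ (x+1)^p * (1 - p/(x+1))
  have hs : (-1:ℝ) ≤ -(1 / (x + 1)) := by
    rw [neg_le_neg_iff]
    rw [div_le_one hx1]; linarith
  have hbern := one_add_mul_self_le_rpow_one_add hs hp
  have heq : (1 + -(1 / (x + 1))) = x / (x + 1) := by
    field_simp; ring
  rw [heq] at hbern
  have h1 : (x / (x + 1)) ^ p = x ^ p / (x + 1) ^ p :=
    Real.div_rpow hx0.le hx1.le p
  rw [h1] at hbern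
  -- multiply by (x+1)^p
  have hpow : (0:ℝ) < (x + 1) ^ p := Real.rpow_pos_of_pos hx1 _
  have h2 : (1 + p * -(1 / (x + 1))) * (x + 1) ^ p ≤ x ^ p :=
    (le_div_iff₀ hpow).mp hbern
  have h3 : (x + 1) ^ p - p * (x + 1) ^ (p - 1) ≤ x ^ p := by
    have : (1 + p * -(1 / (x + 1))) * (x + 1) ^ p
        = (x + 1) ^ p - p * ((x + 1) ^ p / (x + 1)) := by ring
    rw [this] at h2
    rwa [Real.rpow_sub hx1, Real.rpow_one]
  have h4 : (x + 1) ^ (p - 1) ≤ 2 ^ (p - 1) * x ^ (p - 1) := by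
    have : (2:ℝ) ^ (p - 1) * x ^ (p - 1) = (2 * x) ^ (p - 1) := by
      rw [Real.mul_rpow (by norm_num) hx0.le]
    rw [this]
    exact Real.rpow_le_rpow hx1.le (by linarith) (by linarith)
  nlinarith [Real.rpow_nonneg hx1.le (p-1), hp]

/-- Discrete growth lemma: for real `α > k > 0` and `C > 0` there is `0 < D ≤ 1`
(depending only on `α, k, C`) such that every sequence `(v i)` of nonnegative reals
with `v 1 ≥ 1` and `v (i+1) ≥ v i + C · (v i)^(k/α)` for all `i ≥ 1` satisfies
`v i ≥ D · i^(α/(α-k))` for all `i ≥ 1`. -/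
theorem discrete_growth_lemma (α k C : ℝ) (hk : 0 < k) (hα : k < α) (hC : 0 < C) :
    ∃ D : ℝ, 0 < D ∧ D ≤ 1 ∧ ∀ v : ℕ → ℝ, (∀ i, 0 ≤ v i) → 1 ≤ v 1 →
      (∀ i : ℕ, 1 ≤ i → v i + C * (v i) ^ (k / α) ≤ v (i + 1)) →
      ∀ i : ℕ, 1 ≤ i → D * (i : ℝ) ^ (α / (α - k)) ≤ v i := by
  have hαk : 0 < α - k := by linarith
  have hα0 : 0 < α := lt_trans hk hα
  set p : ℝ := α / (α - k) with hpdef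
  have hp1 : 1 < p := by
    rw [hpdef, lt_div_iff₀ hαk]; linarith
  have hp0 : 0 < p := lt_trans one_pos hp1
  have hka : k / α = (p - 1) / p := by
    rw [hpdef]; field_simp; ring
  set m : ℝ := min 1 (C / (p * 2 ^ (p - 1))) with hmdef
  have hden : (0:ℝ) < p * 2 ^ (p - 1) := by
    positivity
  have hm0 : 0 < m := lt_min one_pos (div_pos hC hden)
  have hm1 : m ≤ 1 := min_le_left _ _
  refine ⟨m ^ p, Real.rpow_pos_of_pos hm0 _, Real.rpow_le_one hm0.le hm1 hp0.le, ?_⟩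
  intro v hv0 hv1 hstep
  -- key step inequality for D = m^p
  have hmC : m * (p * 2 ^ (p - 1)) ≤ C := by
    calc m * (p * 2 ^ (p - 1)) ≤ (C / (p * 2 ^ (p - 1))) * (p * 2 ^ (p - 1)) := by
          exact mul_le_mul_of_nonneg_right (min_le_right _ _) hden.le
      _ = C := div_mul_cancel₀ _ hden.ne'
  intro i hi
  induction i with
  | zero => omega
  | succ n ih =>
    rcases Nat.eq_or_lt_of_le hi with h1 | h1
    · -- n + 1 = 1
      have : n = 0 := by omega
      subst this
      have hc : ((0 + 1 : ℕ) : ℝ) = 1 := by norm_num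
      rw [hc, Real.one_rpow, mul_one]
      exact le_trans (Real.rpow_le_one hm0.le hm1 hp0.le) hv1
    · have hn1 : 1 ≤ n := by omega
      have ihn := ih hn1
      have hn0 : (1:ℝ) ≤ (n:ℝ) := by exact_mod_cast hn1
      have hnpos : (0:ℝ) < (n:ℝ) := lt_of_lt_of_le one_pos hn0
      have hDnp_pos : (0:ℝ) < m ^ p * (n:ℝ) ^ p :=
        mul_pos (Real.rpow_pos_of_pos hm0 _) (Real.rpow_pos_of_pos hnpos _)
      -- monotonicity of x ↦ x ^ (k/α)
      have hmono : (m ^ p * (n:ℝ) ^ p) ^ (k / α) ≤ (v n) ^ (k / α) :=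
        Real.rpow_le_rpow hDnp_pos.le ihn (by positivity)
      have hstepn := hstep n hn1
      have hchain : m ^ p * (n:ℝ) ^ p + C * (m ^ p * (n:ℝ) ^ p) ^ (k / α) ≤ v (n + 1) := by
        have := mul_le_mul_of_nonneg_left hmono hC.le
        linarith
      -- now show D * (n+1)^p ≤ LHS of hchain
      have hexp : (m ^ p * (n:ℝ) ^ p) ^ (k / α)
          = m ^ (p - 1) * (n:ℝ) ^ (p - 1) := by
        rw [Real.mul_rpow (Real.rpow_nonneg hm0.le _) (Real.rpow_nonneg hnpos.le _), hka,
          ← Real.rpow_mul hm0.le, ← Real.rpow_mul hnpos.le]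
        have hq : p * ((p - 1) / p) = p - 1 := by field_simp
        rw [hq]
      have hkey := key_growth hp1.le hn0
      -- D * ((n+1)^p - n^p) ≤ C * m^(p-1) * n^(p-1)
      have hD : m ^ p * (((n:ℝ) + 1) ^ p - (n:ℝ) ^ p)
          ≤ C * (m ^ (p - 1) * (n:ℝ) ^ (p - 1)) := by
        have hmp : m ^ p = m ^ (p - 1) * m := by
          have hq : p = (p - 1) + 1 := by ring
          nth_rewrite 1 [hq]
          rw [Real.rpow_add_one hm0.ne']
        rw [hmp]
        have hmp1 : (0:ℝ) ≤ m ^ (p - 1) := Real.rpow_nonneg hm0.le _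
        have h5 : m * (((n:ℝ) + 1) ^ p - (n:ℝ) ^ p) ≤ C * (n:ℝ) ^ (p - 1) := by
          calc m * (((n:ℝ) + 1) ^ p - (n:ℝ) ^ p)
              ≤ m * (p * 2 ^ (p - 1) * (n:ℝ) ^ (p - 1)) :=
                mul_le_mul_of_nonneg_left hkey hm0.le
            _ = (m * (p * 2 ^ (p - 1))) * (n:ℝ) ^ (p - 1) := by ring
            _ ≤ C * (n:ℝ) ^ (p - 1) :=
                mul_le_mul_of_nonneg_right hmC (Real.rpow_nonneg hnpos.le _)
        calc m ^ (p - 1) * m * (((n:ℝ) + 1) ^ p - (n:ℝ) ^ p)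
            = m ^ (p - 1) * (m * (((n:ℝ) + 1) ^ p - (n:ℝ) ^ p)) := by ring
          _ ≤ m ^ (p - 1) * (C * (n:ℝ) ^ (p - 1)) :=
              mul_le_mul_of_nonneg_left h5 hmp1
          _ = C * (m ^ (p - 1) * (n:ℝ) ^ (p - 1)) := by ring
      have hcast : ((n + 1 : ℕ) : ℝ) = (n:ℝ) + 1 := by push_cast; ring
      rw [hcast]
      calc m ^ p * ((n:ℝ) + 1) ^ p
          = m ^ p * (n:ℝ) ^ p + m ^ p * (((n:ℝ) + 1) ^ p - (n:ℝ) ^ p) := by ring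
        _ ≤ m ^ p * (n:ℝ) ^ p + C * (m ^ (p - 1) * (n:ℝ) ^ (p - 1)) := by linarith
        _ = m ^ p * (n:ℝ) ^ p + C * (m ^ p * (n:ℝ) ^ p) ^ (k / α) := by rw [hexp]
        _ ≤ v (n + 1) := hchain
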